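/- Suppose C(t) is nonempty, closed and convex for every t ∈ [0,T], and let u₀ ∈ C(0). Let (u_k) be a sequence of solutions of the sweeping process (P) with initial value u₀, with Bochner-integrable derivatives (v_k). Let u : [0,T] → H and let v : [0,T] → H be Bochner integrable with u(t) = u(0) + ∫₀ᵗ v(τ) dτ for all t ∈ [0,T]. If ∫₀ᵀ ‖u_k(τ) − u(τ)‖ dτ → 0 and ∫₀ᵀ ‖v_k(τ) − v(τ)‖ dτ → 0 as k → ∞, then u(0) = u₀ and u is a solution of (P) with initial value u₀. In other words, the solution set Sol(P,u₀) is closed in the Sobolev space W^{1,1}([0,T], H). -/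

import Mathlib

open MeasureTheory Set
open scoped RealInnerProductSpace

/-- `u` (with Bochner-integrable derivative `v`) is a solution of the sweeping process (P)
with velocity constraint `C`, data `A₀, A₁, f`, and initial value `u₀` on `[0,T]`. -/
def SweepSol {H : Type*} [NormedAddCommGroup H] [InnerProductSpace ℝ H]
    (T : ℝ) (A₀ A₁ : H →L[ℝ] H) (f : ℝ → H) (C : ℝ → Set H)
    (u₀ : H) (u v : ℝ → H) : Prop :=
  IntegrableOn v (Icc 0 T) ∧
  (∀ t ∈ Icc (0:ℝ) T, u t = u₀ + ∫ τ in (0:ℝ)..t, v τ) ∧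
  (∀ᵐ t ∂(volume.restrict (Icc (0:ℝ) T)),
    v t ∈ C t ∧ ∀ z ∈ C t, 0 ≤ ⟪A₁ (v t) + A₀ (u t) - f t, z - v t⟫)

/-- A function that agrees on `[0,T]` with `c + ∫₀ᵗ g` for an integrable `g`
is integrable on `[0,T]`. -/
lemma integrableOn_of_primitive_rep
    {H : Type*} [NormedAddCommGroup H] [InnerProductSpace ℝ H] [CompleteSpace H]
    {T : ℝ} (hT : 0 ≤ T) {g : ℝ → H} (hg : IntegrableOn g (Icc 0 T))
    (c : H) {w : ℝ → H} (hw : ∀ t ∈ Icc (0:ℝ) T, w t = c + ∫ τ in (0:ℝ)..t, g τ) :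
    IntegrableOn w (Icc 0 T) := by
  have hgu : IntegrableOn g (uIcc 0 T) := by rwa [uIcc_of_le hT]
  have hcont : ContinuousOn (fun t => c + ∫ τ in (0:ℝ)..t, g τ) (Icc 0 T) := by
    have := intervalIntegral.continuousOn_primitive_interval (a := (0:ℝ)) (b := T)
      (μ := volume) hgu
    rw [uIcc_of_le hT] at this
    exact continuousOn_const.add this
  exact (hcont.integrableOn_Icc).congr_fun (fun t ht => (hw t ht).symm) measurableSet_Icc

theorem solution_set_closed_in_W11
    {H : Type*} [NormedAddCommGroup H] [InnerProductSpace ℝ H] [CompleteSpace H]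
    (T : ℝ) (hT : 0 < T) (A₀ A₁ : H →L[ℝ] H)
    (hA₀sym : ∀ x y : H, ⟪A₀ x, y⟫ = ⟪x, A₀ y⟫)
    (hA₁sym : ∀ x y : H, ⟪A₁ x, y⟫ = ⟪x, A₁ y⟫)
    (hA₀pos : ∀ x : H, 0 ≤ ⟪A₀ x, x⟫)
    (hA₁pos : ∀ x : H, 0 ≤ ⟪A₁ x, x⟫)
    (f : ℝ → H) (hf : ContinuousOn f (Icc 0 T))
    (C : ℝ → Set H)
    (hC : ∀ t ∈ Icc (0:ℝ) T, (C t).Nonempty ∧ IsClosed (C t) ∧ Convex ℝ (C t))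
    (u₀ : H) (hu₀ : u₀ ∈ C 0)
    (uk vk : ℕ → ℝ → H)
    (hk : ∀ k, SweepSol T A₀ A₁ f C u₀ (uk k) (vk k))
    (u v : ℝ → H)
    (hv : IntegrableOn v (Icc 0 T))
    (hu : ∀ t ∈ Icc (0:ℝ) T, u t = u 0 + ∫ τ in (0:ℝ)..t, v τ)
    (huconv : Filter.Tendsto (fun k => ∫ τ in Icc (0:ℝ) T, ‖uk k τ - u τ‖)
      Filter.atTop (nhds 0))
    (hvconv : Filter.Tendsto (fun k => ∫ τ in Icc (0:ℝ) T, ‖vk k τ - v τ‖)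
      Filter.atTop (nhds 0)) :
    u 0 = u₀ ∧ SweepSol T A₀ A₁ f C u₀ u v := by
  set μ := volume.restrict (Icc (0:ℝ) T) with hμ
  -- integrability of u and the uk's on [0,T]
  have huInt : IntegrableOn u (Icc 0 T) := integrableOn_of_primitive_rep hT.le hv (u 0) hu
  have hukInt : ∀ k, IntegrableOn (uk k) (Icc 0 T) := fun k =>
    integrableOn_of_primitive_rep hT.le (hk k).1 u₀ (hk k).2.1
  -- interval integrability
  have hIntInt : ∀ (g : ℝ → H), IntegrableOn g (Icc 0 T) → ∀ τ ∈ Icc (0:ℝ) T,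
      IntervalIntegrable g volume 0 τ := by
    intro g hg τ hτ
    rw [intervalIntegrable_iff_integrableOn_Ioc_of_le hτ.1]
    exact hg.mono_set (fun x hx => ⟨hx.1.le, hx.2.trans hτ.2⟩)
  -- Step 1 : u 0 = u₀
  have hu0 : u 0 = u₀ := by
    have key : ∀ k, T * ‖u 0 - u₀‖ ≤
        (∫ τ in Icc (0:ℝ) T, ‖uk k τ - u τ‖) +
          T * (∫ τ in Icc (0:ℝ) T, ‖vk k τ - v τ‖) := by
      intro k
      have hdiffInt : IntegrableOn (fun τ => ‖vk k τ - v τ‖) (Icc 0 T) :=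
        ((hk k).1.sub hv).norm
      have hnn : (0:ℝ) ≤ ∫ τ in Icc (0:ℝ) T, ‖vk k τ - v τ‖ :=
        setIntegral_nonneg measurableSet_Icc (fun x _ => norm_nonneg _)
      have hptwise : ∀ τ ∈ Icc (0:ℝ) T, ‖u 0 - u₀‖ ≤
          ‖uk k τ - u τ‖ + ∫ σ in Icc (0:ℝ) T, ‖vk k σ - v σ‖ := by
        intro τ hτ
        have h1 := (hk k).2.1 τ hτ
        have h2 := hu τ hτ
        have hvki := hIntInt _ (hk k).1 τ hτ
        have hvi := hIntInt _ hv τ hτ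
        have heq : u 0 - u₀ = (u τ - uk k τ) + ∫ σ in (0:ℝ)..τ, (vk k σ - v σ) := by
          rw [intervalIntegral.integral_sub hvki hvi, h1, h2]
          abel
        have hbound : ‖∫ σ in (0:ℝ)..τ, (vk k σ - v σ)‖ ≤
            ∫ σ in Icc (0:ℝ) T, ‖vk k σ - v σ‖ := by
          refine le_trans intervalIntegral.norm_integral_le_integral_norm_uIoc ?_
          rw [uIoc_of_le hτ.1]
          refine setIntegral_mono_set hdiffInt
            (Filter.Eventually.of_forall fun x => norm_nonneg _)
            (HasSubset.Subset.eventuallyLE (fun x hx => ⟨hx.1.le, hx.2.trans hτ.2⟩))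
        calc ‖u 0 - u₀‖ ≤ ‖u τ - uk k τ‖ + ‖∫ σ in (0:ℝ)..τ, (vk k σ - v σ)‖ := by
              rw [heq]; exact norm_add_le _ _
          _ ≤ ‖uk k τ - u τ‖ + ∫ σ in Icc (0:ℝ) T, ‖vk k σ - v σ‖ := by
              rw [norm_sub_rev (u τ)]; exact add_le_add_right hbound _
      have h1 : IntegrableOn (fun τ => ‖uk k τ - u τ‖) (Icc 0 T) :=
        ((hukInt k).sub huInt).norm
      have hmono : (∫ _ in Icc (0:ℝ) T, ‖u 0 - u₀‖) ≤
          ∫ τ in Icc (0:ℝ) T, (‖uk k τ - u τ‖ + ∫ σ in Icc (0:ℝ) T, ‖vk k σ - v σ‖) := by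
        refine setIntegral_mono_on (integrableOn_const measure_Icc_lt_top.ne)
          (h1.add (integrableOn_const measure_Icc_lt_top.ne))
          measurableSet_Icc hptwise
      have hμIcc : volume.real (Icc (0:ℝ) T) = T := by
        rw [measureReal_def, Real.volume_Icc]; simp [hT.le]
      rw [setIntegral_const, hμIcc, smul_eq_mul, mul_comm] at hmono
      rw [integral_add h1 (integrable_const _),
        setIntegral_const, hμIcc, smul_eq_mul] at hmono
      linarith [hmono]
    have hlim : Filter.Tendsto (fun k => (∫ τ in Icc (0:ℝ) T, ‖uk k τ - u τ‖) +
        T * (∫ τ in Icc (0:ℝ) T, ‖vk k τ - v τ‖)) Filter.atTop (nhds 0) := by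
      have := huconv.add (hvconv.const_mul T)
      simpa using this
    have hle : T * ‖u 0 - u₀‖ ≤ 0 := ge_of_tendsto hlim (Filter.Eventually.of_forall key)
    have hx : ‖u 0 - u₀‖ ≤ 0 := by nlinarith [norm_nonneg (u 0 - u₀)]
    exact sub_eq_zero.mp (norm_le_zero_iff.mp hx)
  -- Step 2 : convergence in measure and a.e. convergent subsequences
  have hTIM : ∀ (w : ℕ → ℝ → H) (w' : ℝ → H), (∀ k, IntegrableOn (w k) (Icc 0 T)) →
      IntegrableOn w' (Icc 0 T) →
      Filter.Tendsto (fun k => ∫ τ in Icc (0:ℝ) T, ‖w k τ - w' τ‖) Filter.atTop (nhds 0) →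
      TendstoInMeasure μ w Filter.atTop w' := by
    intro w w' hwInt hw'Int hconv
    refine tendstoInMeasure_of_tendsto_eLpNorm (p := 1) one_ne_zero
      (fun k => (hwInt k).aestronglyMeasurable) hw'Int.aestronglyMeasurable ?_
    have heq : ∀ k, eLpNorm (w k - w') 1 μ =
        ENNReal.ofReal (∫ τ in Icc (0:ℝ) T, ‖w k τ - w' τ‖) := by
      intro k
      rw [eLpNorm_one_eq_lintegral_enorm,
        ← ofReal_integral_norm_eq_lintegral_enorm ((hwInt k).sub hw'Int)]
      rfl
    simp_rw [heq]
    rw [show (0 : ENNReal) = ENNReal.ofReal 0 by simp]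
    exact (ENNReal.continuous_ofReal.tendsto 0).comp hconv
  have hvTIM : TendstoInMeasure μ vk Filter.atTop v := hTIM vk v (fun k => (hk k).1) hv hvconv
  have huTIM : TendstoInMeasure μ uk Filter.atTop u := hTIM uk u hukInt huInt huconv
  obtain ⟨ns, hns_mono, hns⟩ := hvTIM.exists_seq_tendsto_ae
  have huTIM' : TendstoInMeasure μ (fun j => uk (ns j)) Filter.atTop u := fun ε hε =>
    (huTIM ε hε).comp hns_mono.tendsto_atTop
  obtain ⟨ms, hms_mono, hms⟩ := huTIM'.exists_seq_tendsto_ae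
  have hv' : ∀ᵐ t ∂μ, Filter.Tendsto (fun j => vk (ns (ms j)) t) Filter.atTop (nhds (v t)) :=
    hns.mono fun t ht => ht.comp hms_mono.tendsto_atTop
  -- Step 3 : pass to the limit in the variational inequality
  have hVI : ∀ᵐ t ∂μ, ∀ k, vk k t ∈ C t ∧
      ∀ z ∈ C t, 0 ≤ ⟪A₁ (vk k t) + A₀ (uk k t) - f t, z - vk k t⟫ :=
    ae_all_iff.mpr fun k => (hk k).2.2
  refine ⟨hu0, hv, fun t ht => by rw [hu t ht, hu0], ?_⟩
  filter_upwards [ae_restrict_mem measurableSet_Icc, hv', hms, hVI]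
    with t htIcc htv htu hVIall
  have hmemC : v t ∈ C t :=
    (hC t htIcc).2.1.mem_of_tendsto htv
      (Filter.Eventually.of_forall fun j => (hVIall (ns (ms j))).1)
  refine ⟨hmemC, fun z hz => ?_⟩
  have hlim : Filter.Tendsto
      (fun j => ⟪A₁ (vk (ns (ms j)) t) + A₀ (uk (ns (ms j)) t) - f t, z - vk (ns (ms j)) t⟫)
      Filter.atTop (nhds ⟪A₁ (v t) + A₀ (u t) - f t, z - v t⟫) := by
    refine Filter.Tendsto.inner ?_ (Filter.Tendsto.const_sub z htv)
    exact ((((A₁.continuous.tendsto _).comp htv).add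
      ((A₀.continuous.tendsto _).comp htu)).sub tendsto_const_nhds)
  exact ge_of_tendsto hlim
    (Filter.Eventually.of_forall fun j => (hVIall (ns (ms j))).2 z hz)
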